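/- Let K be an algebraically closed field of characteristic zero and F ∈ K[y,z] irreducible. If y(x) ∈ K⟨⟨x⟩⟩ is a non-constant formal Puiseux series with F(y(x), y'(x)) = 0, and R ∈ K[y,z] satisfies deg(R,z) < deg(F,z) and R(y(x), y'(x)) = 0, then R is the zero polynomial. -/

import Mathlib

open Polynomial

/-- The formal derivative of a Hahn/Puiseux series: the coefficient of `x^q`
in `f'` is `(q+1) · (coefficient of `x^{q+1}` in `f`)`. -/
noncomputable def pDeriv {K : Type*} [Field K] [CharZero K] (f : HahnSeries ℚ K) :
    HahnSeries ℚ K where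
  coeff q := (q + 1 : ℚ) • f.coeff (q + 1)
  isPWO_support' := by
    have hsub : (Function.support fun q : ℚ => (q + 1 : ℚ) • f.coeff (q + 1)) ⊆
        (fun q : ℚ => q - 1) '' f.support := by
      intro q hq
      refine ⟨q + 1, ?_, by ring⟩
      intro h
      simp [Function.mem_support, h] at hq
    exact (f.isPWO_support.image_of_monotone
      (fun a b hab => by simpa using sub_le_sub_right hab 1)).mono hsub

/-- A Hahn series over `ℚ` is a (formal) Puiseux series if the exponents in its
support have a common denominator. -/
def IsPuiseux {K : Type*} [Field K] (f : HahnSeries ℚ K) : Prop :=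
  ∃ n : ℕ, 0 < n ∧ ∀ q ∈ f.support, ∃ m : ℤ, q = (m : ℚ) / n

open scoped nonZeroDivisors

open MvPolynomial in
lemma helperMain {K L : Type*} [Field K] [Field L] [Algebra K L]
    (F R : MvPolynomial (Fin 2) K) (hF : Irreducible F)
    (v : Fin 2 → L) (htr : Transcendental K (v 0))
    (hsolF : MvPolynomial.aeval v F = 0)
    (hdeg : MvPolynomial.degreeOf 1 R < MvPolynomial.degreeOf 1 F)
    (hsolR : MvPolynomial.aeval v R = 0) : R = 0 := by
  classical
  by_contra hR0
  set B := MvPolynomial (Fin 1) K with hB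
  letI : NormalizedGCDMonoid B := Classical.choice inferInstance
  set σ : MvPolynomial (Fin 2) K ≃ₐ[K] MvPolynomial (Fin 2) K :=
    renameEquiv K (Equiv.swap 0 1) with hσ
  set e : MvPolynomial (Fin 2) K ≃ₐ[K] Polynomial B := finSuccEquiv K 1 with he
  set F' : Polynomial B := e (σ F) with hF'
  set R' : Polynomial B := e (σ R) with hR'
  -- the evaluation map
  set ψ : Polynomial B →+* L :=
    Polynomial.eval₂RingHom ((MvPolynomial.aeval (fun _ : Fin 1 => v 0)).toRingHom) (v 1) with hψ
  have hσ0 : σ (MvPolynomial.X (0 : Fin 2)) = MvPolynomial.X 1 := by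
    rw [hσ]; simp
  have hσ1 : σ (MvPolynomial.X (1 : Fin 2)) = MvPolynomial.X 0 := by
    rw [hσ]; simp
  have hσC : ∀ r : K, σ (MvPolynomial.C r) = MvPolynomial.C r := by
    intro r; rw [hσ]; simp
  have heX1 : e (MvPolynomial.X (1 : Fin 2)) = Polynomial.C (MvPolynomial.X 0) :=
    finSuccEquiv_X_succ (j := 0)
  have heX0 : e (MvPolynomial.X (0 : Fin 2)) = Polynomial.X := finSuccEquiv_X_zero
  have heC : ∀ r : K, e (MvPolynomial.C r) = Polynomial.C (MvPolynomial.C r) := by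
    intro r
    have h2 := e.commutes r
    rwa [show (algebraMap K (MvPolynomial (Fin 2) K)) r = MvPolynomial.C r from rfl,
      show (algebraMap K (Polynomial B)) r = Polynomial.C (MvPolynomial.C r) from rfl] at h2
  have hψX : ψ Polynomial.X = v 1 := Polynomial.eval₂_X _ _
  have hψC : ∀ q : B, ψ (Polynomial.C q) = MvPolynomial.aeval (fun _ : Fin 1 => v 0) q :=
    fun q => Polynomial.eval₂_C _ _
  have hkey : ∀ p : MvPolynomial (Fin 2) K, ψ (e (σ p)) = MvPolynomial.aeval v p := by
    have hcomp : ψ.comp ((e.toAlgHom.comp σ.toAlgHom :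
        MvPolynomial (Fin 2) K →ₐ[K] Polynomial B) :
        MvPolynomial (Fin 2) K →+* Polynomial B) = (MvPolynomial.aeval v : _ →ₐ[K] L) := by
      apply MvPolynomial.ringHom_ext
      · intro r
        have : ψ (e (σ (MvPolynomial.C r))) = algebraMap K L r := by
          rw [hσC, heC, hψC]; simp
        simpa using this
      · intro i
        fin_cases i
        · have : ψ (e (σ (MvPolynomial.X (0 : Fin 2)))) = v 0 := by
            rw [hσ0, heX1, hψC]; simp
          simpa using this
        · have : ψ (e (σ (MvPolynomial.X (1 : Fin 2)))) = v 1 := by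
            rw [hσ1, heX0, hψX]
          simpa using this
    intro p
    have := congrArg (fun f => f p) hcomp
    simpa using this
  have hψF : ψ F' = 0 := by rw [hF', hkey, hsolF]
  have hψR : ψ R' = 0 := by rw [hR', hkey, hsolR]
  -- degrees
  have hdF : F'.natDegree = MvPolynomial.degreeOf 1 F := by
    rw [hF', he, natDegree_finSuccEquiv, hσ]
    simpa using degreeOf_rename_of_injective (Equiv.swap (0:Fin 2) 1).injective 1
  have hdR : R'.natDegree = MvPolynomial.degreeOf 1 R := by
    rw [hR', he, natDegree_finSuccEquiv, hσ]
    simpa using degreeOf_rename_of_injective (Equiv.swap (0:Fin 2) 1).injective 1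
  have hF'irr : Irreducible F' := by
    rw [hF']
    exact Irreducible.map e (Irreducible.map σ hF)
  have hR'0 : R' ≠ 0 := by
    simp only [hR', ne_eq, EmbeddingLike.map_eq_zero_iff]
    exact hR0
  have hdFpos : 1 ≤ F'.natDegree := by omega
  -- primitivity
  have hprim : F'.IsPrimitive := by
    intro r hr
    obtain ⟨g, hg⟩ := hr
    rcases hF'irr.isUnit_or_isUnit hg with h | h
    · exact Polynomial.isUnit_C.mp h
    · exfalso
      have hg0 : g ≠ 0 := h.ne_zero
      have hC0 : (Polynomial.C r : Polynomial B) ≠ 0 := by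
        intro hc
        rw [hc, zero_mul] at hg
        exact hF'irr.ne_zero hg
      have : F'.natDegree = 0 := by
        rw [hg, Polynomial.natDegree_mul hC0 hg0, Polynomial.natDegree_C,
          Polynomial.natDegree_eq_zero_of_isUnit h]
      omega
  -- pass to the fraction field
  set K' := FractionRing B with hK'
  have hfinj : Function.Injective (algebraMap B K') := IsFractionRing.injective B K'
  set F'' : Polynomial K' := F'.map (algebraMap B K') with hF''def
  set R'' : Polynomial K' := R'.map (algebraMap B K') with hR''def
  have hdF'' : F''.natDegree = F'.natDegree :=
    Polynomial.natDegree_map_eq_of_injective hfinj F'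
  have hdR'' : R''.natDegree = R'.natDegree :=
    Polynomial.natDegree_map_eq_of_injective hfinj R'
  have hR''0 : R'' ≠ 0 := by
    rw [hR''def, Polynomial.map_ne_zero_iff hfinj]
    exact hR'0
  have hF''irr : Irreducible F'' :=
    (hprim.irreducible_iff_irreducible_map_fraction_map).mp hF'irr
  have hnd : ¬ F'' ∣ R'' := fun h => by
    have := Polynomial.natDegree_le_of_dvd h hR''0
    omega
  have hco : IsCoprime F'' R'' := (hF''irr.coprime_iff_not_dvd).mpr hnd
  obtain ⟨a, b, hab⟩ := hco
  obtain ⟨ca, hca⟩ := IsLocalization.integerNormalization_map_to_map B⁰ a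
  obtain ⟨cb, hcb⟩ := IsLocalization.integerNormalization_map_to_map B⁰ b
  set iNa := IsLocalization.integerNormalization B⁰ a with hiNa
  set iNb := IsLocalization.integerNormalization B⁰ b with hiNb
  set d : B := (ca : B) * (cb : B) with hd
  have hd0 : d ≠ 0 :=
    mul_ne_zero (nonZeroDivisors.coe_ne_zero ca) (nonZeroDivisors.coe_ne_zero cb)
  have hsm : ∀ (c : B) (p : Polynomial K'),
      c • p = Polynomial.C (algebraMap B K' c) * p := by
    intro c p
    rw [Algebra.smul_def, Polynomial.algebraMap_apply]
  have hmain : Polynomial.C (cb : B) * iNa * F' + Polynomial.C (ca : B) * iNb * R'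
      = Polynomial.C d := by
    apply Polynomial.map_injective (algebraMap B K') hfinj
    rw [Polynomial.map_add, Polynomial.map_mul, Polynomial.map_mul, Polynomial.map_mul,
      Polynomial.map_mul, Polynomial.map_C, Polynomial.map_C, Polynomial.map_C,
      hca, hcb, hsm, hsm, ← hF''def, ← hR''def]
    calc Polynomial.C (algebraMap B K' ↑cb) * (Polynomial.C (algebraMap B K' ↑ca) * a) * F''
          + Polynomial.C (algebraMap B K' ↑ca) * (Polynomial.C (algebraMap B K' ↑cb) * b) * R''
        = Polynomial.C (algebraMap B K' ↑ca) * Polynomial.C (algebraMap B K' ↑cb)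
            * (a * F'' + b * R'') := by ring
      _ = Polynomial.C (algebraMap B K' d) := by
          rw [hab, mul_one, ← Polynomial.C_mul, ← map_mul, hd]
  -- evaluate everything at v
  have heval : MvPolynomial.aeval (fun _ : Fin 1 => v 0) d = 0 := by
    have h : ψ (Polynomial.C d) = 0 := by
      rw [← hmain]
      simp only [map_add, map_mul, hψF, hψR, mul_zero, add_zero]
    rwa [hψC] at h
  have hinj : Function.Injective (MvPolynomial.aeval (fun _ : Fin 1 => v 0) :
      MvPolynomial (Fin 1) K →ₐ[K] L) := by
    refine algebraicIndependent_iff_injective_aeval.mp ?_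
    rw [algebraicIndependent_unique_type_iff]
    exact htr
  exact hd0 (hinj (by simpa using heval))

lemma transcendental_of_ne_C {K : Type*} [Field K] [IsAlgClosed K]
    (y : HahnSeries ℚ K) (hync : ∀ c : K, y ≠ HahnSeries.C c) :
    Transcendental K y := by
  intro halg
  have hint : IsIntegral K y := halg.isIntegral
  have hirr := minpoly.irreducible hint
  have hdeg : (minpoly K y).degree = 1 := IsAlgClosed.degree_eq_one_of_irreducible K hirr
  obtain ⟨c, hc⟩ := minpoly.degree_eq_one_iff.mp hdeg
  refine hync c ?_
  rw [← hc, HahnSeries.algebraMap_apply' (Γ := ℚ) (R := K) c,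
    show algebraMap K (PowerSeries K) c = PowerSeries.C c from rfl,
    HahnSeries.ofPowerSeries_C]

theorem statement2 {K : Type*} [Field K] [IsAlgClosed K] [CharZero K]
    (F R : MvPolynomial (Fin 2) K) (hF : Irreducible F)
    (y : HahnSeries ℚ K) (hy : IsPuiseux y)
    (hync : ∀ c : K, y ≠ HahnSeries.C c)
    (hsol : MvPolynomial.aeval ![y, pDeriv y] F = 0)
    (hdegR : MvPolynomial.degreeOf 1 R < MvPolynomial.degreeOf 1 F)
    (hRzero : MvPolynomial.aeval ![y, pDeriv y] R = 0) :
    R = 0 := by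
  have htr : Transcendental K (![y, pDeriv y] 0) := by
    simpa using transcendental_of_ne_C y hync
  exact helperMain F R hF ![y, pDeriv y] htr hsol hdegR hRzero
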